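/- For any complex root α of u(x) = x^{m+1}(x^{m+1}+x)^k − 1, we have |(k+1)α^{m+1} + (k+m+1)α| ≤ (k+1)r₊^{m+1} + (k+m+1)r₊, where r₊ is the unique positive real root of u. -/

import Mathlib

/-- Integer-weight two-variable AM-GM: `x^a * y^b ≤ ((a*x+b*y)/(a+b))^(a+b)`. -/
lemma amgm_nat (x y : ℝ) (hx : 0 ≤ x) (hy : 0 ≤ y) (a b : ℕ) (hab : 0 < a + b) :
    x ^ a * y ^ b ≤ (((a : ℝ) * x + (b : ℝ) * y) / ((a : ℝ) + (b : ℝ))) ^ (a + b) := by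
  set n : ℕ := a + b with hn
  have hnR : (0:ℝ) < (n : ℝ) := by exact_mod_cast hab
  have hw₁ : (0:ℝ) ≤ (a : ℝ) / n := by positivity
  have hw₂ : (0:ℝ) ≤ (b : ℝ) / n := by positivity
  have hw : (a : ℝ) / n + (b : ℝ) / n = 1 := by
    rw [← add_div]
    field_simp
    push_cast [hn]
    ring
  have h := Real.geom_mean_le_arith_mean2_weighted hw₁ hw₂ hx hy hw
  have hM : (0:ℝ) ≤ (a : ℝ) / n * x + (b : ℝ) / n * y := by positivity
  have hL : (0:ℝ) ≤ x ^ ((a:ℝ)/n) * y ^ ((b:ℝ)/n) := by positivity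
  have h2 := Real.rpow_le_rpow hL h (le_of_lt hnR)
  have hLL : (x ^ ((a:ℝ)/n) * y ^ ((b:ℝ)/n)) ^ (n:ℝ) = x ^ a * y ^ b := by
    rw [Real.mul_rpow (Real.rpow_nonneg hx _) (Real.rpow_nonneg hy _),
      ← Real.rpow_mul hx, ← Real.rpow_mul hy,
      div_mul_cancel₀ _ (ne_of_gt hnR), div_mul_cancel₀ _ (ne_of_gt hnR),
      Real.rpow_natCast, Real.rpow_natCast]
  have hRR : ((a:ℝ)/n * x + (b:ℝ)/n * y) ^ (n:ℝ)
      = (((a : ℝ) * x + (b : ℝ) * y) / ((a : ℝ) + (b : ℝ))) ^ n := by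
    rw [Real.rpow_natCast]
    congr 1
    have : ((a:ℝ) + (b:ℝ)) = (n:ℝ) := by push_cast [hn]; ring
    rw [this]
    ring
  calc x ^ a * y ^ b = (x ^ ((a:ℝ)/n) * y ^ ((b:ℝ)/n)) ^ (n:ℝ) := hLL.symm
    _ ≤ (((a:ℝ)/n * x + (b:ℝ)/n * y)) ^ (n:ℝ) := h2
    _ = (((a : ℝ) * x + (b : ℝ) * y) / ((a : ℝ) + (b : ℝ))) ^ n := hRR

lemma key_real (m k : ℕ) (hm : 1 ≤ m) (hk : 1 ≤ k) (r s t : ℝ)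
    (hr : 0 < r) (hs : 0 < s) (ht : 0 < t)
    (hroot : r ^ (m + k + 1) * (r ^ m + 1) ^ k = 1)
    (hst : s ^ (m + k + 1) * t ^ k = 1)
    (ht1 : t ≤ s ^ m + 1) (ht2 : s ^ m ≤ t + 1) :
    ((k : ℝ) + 1) * (s * t) + (m : ℝ) * s
      ≤ ((k : ℝ) + 1) * (r * (r ^ m + 1)) + (m : ℝ) * r := by
  have hmR : (1:ℝ) ≤ (m:ℝ) := by exact_mod_cast hm
  have hkR : (1:ℝ) ≤ (k:ℝ) := by exact_mod_cast hk
  -- Step 1: r ≤ s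
  have hsr : r ≤ s := by
    by_contra hc
    push_neg at hc
    have h1 : s ^ (m + k + 1) * t ^ k ≤ s ^ (m + k + 1) * (s ^ m + 1) ^ k :=
      mul_le_mul_of_nonneg_left (pow_le_pow_left₀ ht.le ht1 k) (by positivity)
    have h2 : s ^ (m + k + 1) * (s ^ m + 1) ^ k < r ^ (m + k + 1) * (r ^ m + 1) ^ k := by
      apply mul_lt_mul (pow_lt_pow_left₀ hc hs.le (by omega))
        (pow_le_pow_left₀ (by positivity) (by nlinarith [pow_le_pow_left₀ hs.le hc.le m]) k)
        (by positivity) (by positivity)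
    rw [hst, hroot] at *
    linarith
  -- Step 2: lower bound on t
  have htau : (m : ℝ) * k / (((m:ℝ) + 1) * ((k:ℝ) + 1)) ≤ t := by
    set τ : ℝ := (m : ℝ) * k / (((m:ℝ) + 1) * ((k:ℝ) + 1)) with hτ
    have hτpos : 0 < τ := by positivity
    by_contra hc
    push_neg at hc
    -- 1 ≤ t^(m*k) * (t+1)^(m+k+1)
    have e1 : (s ^ m) ^ (m + k + 1) * t ^ (m * k) = 1 := by
      have : (s ^ (m + k + 1) * t ^ k) ^ m = 1 := by rw [hst]; exact one_pow m
      calc (s ^ m) ^ (m + k + 1) * t ^ (m * k)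
          = (s ^ (m + k + 1)) ^ m * (t ^ k) ^ m := by
            rw [← pow_mul, ← pow_mul, ← pow_mul, Nat.mul_comm m k,
              Nat.mul_comm m (m + k + 1)]
        _ = (s ^ (m + k + 1) * t ^ k) ^ m := (mul_pow _ _ m).symm
        _ = 1 := this
    have e2 : (1:ℝ) ≤ t ^ (m * k) * (t + 1) ^ (m + k + 1) := by
      have h3 : (s ^ m) ^ (m + k + 1) ≤ (t + 1) ^ (m + k + 1) :=
        pow_le_pow_left₀ (by positivity) ht2 _
      nlinarith [pow_pos ht (m*k), pow_pos (show (0:ℝ) < t + 1 by linarith) (m+k+1)]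
    -- strict mono
    have e3 : t ^ (m * k) * (t + 1) ^ (m + k + 1) < τ ^ (m * k) * (τ + 1) ^ (m + k + 1) := by
      apply mul_lt_mul'' (pow_lt_pow_left₀ hc ht.le (by positivity))
        (pow_lt_pow_left₀ (by linarith) (by linarith) (by omega)) (by positivity) (by positivity)
    -- AM-GM bound: τ^(mk) * (τ+1)^(m+k+1) ≤ 1
    have e4 : τ ^ (m * k) * (τ + 1) ^ (m + k + 1) ≤ 1 := by
      have h := amgm_nat τ (τ + 1) hτpos.le (by linarith) (m * k) (m + k + 1) (by omega)
      have hinner : ((((m * k : ℕ)) : ℝ) * τ + (((m + k + 1 : ℕ)) : ℝ) * (τ + 1)) /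
          ((((m * k : ℕ)) : ℝ) + (((m + k + 1 : ℕ)) : ℝ)) = 1 := by
        rw [hτ]
        push_cast
        rw [div_eq_one_iff_eq (by positivity)]
        field_simp
        ring
      rw [hinner, one_pow] at h
      exact h
    linarith
  -- Step 3: AM-GM tangent trick
  set u : ℝ := s * t with hu
  set v : ℝ := r * (r ^ m + 1) with hv
  have hupos : 0 < u := by positivity
  have hvpos : 0 < v := by positivity
  have hueq : u ^ k * s ^ (m + 1) = 1 := by
    rw [hu, mul_pow]
    calc s ^ k * t ^ k * s ^ (m + 1) = s ^ (m + k + 1) * t ^ k := by ring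
      _ = 1 := hst
  have hveq : v ^ k * r ^ (m + 1) = 1 := by
    rw [hv, mul_pow]
    calc r ^ k * (r ^ m + 1) ^ k * r ^ (m + 1) = r ^ (m + k + 1) * (r ^ m + 1) ^ k := by ring
      _ = 1 := hroot
  have hlw : (v / u) ^ k * (r / s) ^ (m + 1) = 1 := by
    rw [div_pow, div_pow, div_mul_div_comm, hveq, hueq, div_one]
  have hgm : ((k : ℝ)) + ((m : ℝ) + 1) ≤ (k : ℝ) * (v / u) + ((m : ℝ) + 1) * (r / s) := by
    have h := amgm_nat (v / u) (r / s) (by positivity) (by positivity) k (m + 1) (by omega)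
    rw [hlw] at h
    push_cast at h
    have hden : (0:ℝ) < (k : ℝ) + ((m : ℝ) + 1) := by linarith
    by_contra hcon
    push_neg at hcon
    have hbase : ((k : ℝ) * (v / u) + ((m:ℝ) + 1) * (r / s)) / ((k:ℝ) + ((m:ℝ) + 1)) < 1 := by
      rw [div_lt_one hden]; linarith
    have := pow_lt_one₀ (by positivity) hbase (show k + (m+1) ≠ 0 by omega)
    linarith
  -- multiply by u, use u / s = t
  have hgm2 : ((k:ℝ) + (m:ℝ) + 1) * u ≤ (k:ℝ) * v + ((m:ℝ) + 1) * (r * t) := by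
    have h := mul_le_mul_of_nonneg_right hgm hupos.le
    have e1 : ((k:ℝ) * (v / u) + ((m:ℝ) + 1) * (r / s)) * u
        = (k:ℝ) * v + ((m:ℝ) + 1) * (r * t) := by
      rw [hu]
      field_simp
    rw [e1] at h
    linarith
  -- Step 4: conclude
  -- k*(v - u) ≥ (m+1)*t*(s - r)
  have hks : ((m:ℝ) + 1) * t * (s - r) ≤ (k:ℝ) * (v - u) := by
    have : ((m:ℝ) + 1) * (s * t) = ((m:ℝ) + 1) * u := by rw [hu]
    nlinarith [hgm2]
  -- combine with t ≥ τ and s ≥ r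
  have hprod : 0 ≤ (t * (((m:ℝ) + 1) * ((k:ℝ) + 1)) - (m:ℝ) * k) * (s - r) := by
    apply mul_nonneg _ (by linarith)
    have := htau
    rw [div_le_iff₀ (by positivity)] at this
    linarith
  nlinarith [mul_le_mul_of_nonneg_left hks (show (0:ℝ) ≤ (k:ℝ) + 1 by linarith)]

theorem critical_value_bound (m k : ℕ) (hm : 1 ≤ m) (hk : 1 ≤ k) (r : ℝ) (hr : 0 < r)
    (hroot : r ^ (m + 1) * (r ^ (m + 1) + r) ^ k - 1 = 0)
    (α : ℂ) (hα : α ^ (m + 1) * (α ^ (m + 1) + α) ^ k - 1 = 0) :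
    ‖((k : ℂ) + 1) * α ^ (m + 1) + ((k : ℂ) + (m : ℂ) + 1) * α‖
      ≤ ((k : ℝ) + 1) * r ^ (m + 1) + ((k : ℝ) + m + 1) * r := by
  have hα1 : α ^ (m + 1) * (α ^ (m + 1) + α) ^ k = 1 := sub_eq_zero.mp hα
  have hroot1 : r ^ (m + k + 1) * (r ^ m + 1) ^ k = 1 := by
    have h := sub_eq_zero.mp hroot
    calc r ^ (m + k + 1) * (r ^ m + 1) ^ k
        = r ^ (m + 1) * (r * (r ^ m + 1)) ^ k := by rw [mul_pow]; ring
      _ = r ^ (m + 1) * (r ^ (m + 1) + r) ^ k := by rw [show r * (r ^ m + 1) = r ^ (m+1) + r by ring]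
      _ = 1 := h
  have hαne : α ≠ 0 := by
    intro h
    rw [h] at hα1
    simp [zero_pow (show m + 1 ≠ 0 by omega)] at hα1
  set s : ℝ := ‖α‖ with hsdef
  set t : ℝ := ‖α ^ m + 1‖ with htdef
  have hs : 0 < s := by simpa [hsdef] using hαne
  have hfac : α ^ (m + 1) + α = α * (α ^ m + 1) := by ring
  have hst : s ^ (m + k + 1) * t ^ k = 1 := by
    have h := congrArg (‖·‖) hα1
    rw [hfac] at h
    simp only [norm_mul, norm_pow, norm_one] at h
    calc s ^ (m + k + 1) * t ^ k = s ^ (m + 1) * (s * t) ^ k := by rw [mul_pow]; ring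
      _ = 1 := h
  have ht : 0 < t := by
    rcases lt_or_eq_of_le (norm_nonneg (α ^ m + 1)) with h | h
    · exact h
    · exfalso
      rw [← htdef] at h
      have : t ^ k = 0 := by rw [← h]; simp [zero_pow (show k ≠ 0 by omega)]
      rw [this, mul_zero] at hst
      norm_num at hst
  have ht1 : t ≤ s ^ m + 1 := by
    calc t ≤ ‖α ^ m‖ + ‖(1:ℂ)‖ := norm_add_le _ _
      _ = s ^ m + 1 := by rw [norm_pow, norm_one]
  have ht2 : s ^ m ≤ t + 1 := by
    have : α ^ m = (α ^ m + 1) - 1 := by ring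
    calc s ^ m = ‖(α ^ m + 1) - 1‖ := by rw [← this, norm_pow]
      _ ≤ ‖α ^ m + 1‖ + ‖(1:ℂ)‖ := norm_sub_le _ _
      _ = t + 1 := by rw [norm_one]
  have hkey := key_real m k hm hk r s t hr hs ht hroot1 hst ht1 ht2
  have hgoal_eq : ((k : ℂ) + 1) * α ^ (m + 1) + ((k : ℂ) + (m : ℂ) + 1) * α
      = ((k : ℂ) + 1) * (α * (α ^ m + 1)) + (m : ℂ) * α := by ring
  rw [hgoal_eq]
  have habs1 : ‖((k : ℂ) + 1) * (α * (α ^ m + 1))‖ = ((k:ℝ) + 1) * (s * t) := by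
    rw [norm_mul, norm_mul]
    congr 1
    · rw [show ((k : ℂ) + 1) = (((k : ℝ) + 1 : ℝ) : ℂ) by push_cast; ring,
        Complex.norm_real, Real.norm_of_nonneg (by positivity)]
  have habs2 : ‖(m : ℂ) * α‖ = (m : ℝ) * s := by
    rw [norm_mul, Complex.norm_natCast]
  calc ‖((k : ℂ) + 1) * (α * (α ^ m + 1)) + (m : ℂ) * α‖
      ≤ ‖((k : ℂ) + 1) * (α * (α ^ m + 1))‖ + ‖(m : ℂ) * α‖ :=
        norm_add_le _ _
    _ = ((k:ℝ) + 1) * (s * t) + (m : ℝ) * s := by rw [habs1, habs2]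
    _ ≤ ((k : ℝ) + 1) * (r * (r ^ m + 1)) + (m : ℝ) * r := hkey
    _ = ((k : ℝ) + 1) * r ^ (m + 1) + ((k : ℝ) + m + 1) * r := by ring
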